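/- Let D = {D_a}_{a ∈ A} be a locally finite cover of a small category C, indexed by a totally ordered set A, such that every D_a is a filter of C. Then the natural functor Gr(Č^o(D̃^op)) → C^op, from the Grothendieck construction of the reduced Čech nerve of the opposite cover D^op = {D_a^op}_{a ∈ A} of C^op, has a left adjoint. -/

import Mathlib

open CategoryTheory

namespace CechCover

/-- A subcategory of a small category `C`: a set of objects together with, for each
pair of objects of `C`, a set of morphisms, closed under identities (of objects of the
subcategory) and under composition, all morphisms lying between objects of the
subcategory. -/
structure Subcat (C : Type) [SmallCategory C] where
  objs : Set C
  homs : ∀ x y : C, Set (x ⟶ y)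
  homs_subset : ∀ (x y : C), (homs x y).Nonempty → x ∈ objs ∧ y ∈ objs
  id_mem : ∀ x ∈ objs, 𝟙 x ∈ homs x x
  comp_mem : ∀ {x y z : C} (f : x ⟶ y) (g : y ⟶ z),
    f ∈ homs x y → g ∈ homs y z → f ≫ g ∈ homs x z

variable {C : Type} [SmallCategory C] {A : Type}

/-- The morphisms of the union `⋃ a, D a` of a family of subcategories: those
generated under composition by the morphisms of the `D a`. -/
inductive GenHom (D : A → Subcat C) : ∀ {x y : C}, (x ⟶ y) → Prop
  | of {x y : C} (a : A) (f : x ⟶ y) (hf : f ∈ (D a).homs x y) : GenHom D f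
  | comp {x y z : C} (f : x ⟶ y) (g : y ⟶ z) :
      GenHom D f → GenHom D g → GenHom D (f ≫ g)

/-- `D` is a cover of `C`: the union of the subcategories `D a` is all of `C`. -/
def IsCover (D : A → Subcat C) : Prop :=
  (∀ x : C, ∃ a, x ∈ (D a).objs) ∧ ∀ {x y : C} (f : x ⟶ y), GenHom D f

/-- An ideal of `C`: a full subcategory such that an object `y` belongs to it whenever
`C(y, x)` is nonempty for some object `x` of it. -/
def Subcat.IsIdeal (Dv : Subcat C) : Prop :=
  (∀ x y : C, x ∈ Dv.objs → y ∈ Dv.objs → Dv.homs x y = Set.univ) ∧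
  ∀ x y : C, x ∈ Dv.objs → Nonempty (y ⟶ x) → y ∈ Dv.objs

/-- A filter of `C`: a full subcategory such that an object `y` belongs to it whenever
`C(x, y)` is nonempty for some object `x` of it. -/
def Subcat.IsFilter (Dv : Subcat C) : Prop :=
  (∀ x y : C, x ∈ Dv.objs → y ∈ Dv.objs → Dv.homs x y = Set.univ) ∧
  ∀ x y : C, x ∈ Dv.objs → Nonempty (x ⟶ y) → y ∈ Dv.objs

/-- A cover is locally finite if every object belongs to only finitely many of the
subcategories. -/
def IsLocallyFinite (D : A → Subcat C) : Prop :=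
  ∀ x : C, {a : A | x ∈ (D a).objs}.Finite

/-- The opposite of a subcategory, as a subcategory of the opposite category. -/
def Subcat.op (Dv : Subcat C) : Subcat Cᵒᵖ where
  objs := {x | x.unop ∈ Dv.objs}
  homs x y := {f | f.unop ∈ Dv.homs y.unop x.unop}
  homs_subset x y := fun ⟨f, hf⟩ =>
    ⟨(Dv.homs_subset _ _ ⟨f.unop, hf⟩).2, (Dv.homs_subset _ _ ⟨f.unop, hf⟩).1⟩
  id_mem x hx := Dv.id_mem x.unop hx
  comp_mem f g hf hg := Dv.comp_mem g.unop f.unop hg hf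

/-- Objects of the Grothendieck construction `Gr(Č(D))` of the Čech nerve of a cover
`D`: tuples `x_{a₀…aₙ}` where `x` belongs to the intersection `D_{a₀} ∩ ⋯ ∩ D_{aₙ}`. -/
structure GrCechObj (D : A → Subcat C) where
  n : ℕ
  idx : Fin (n + 1) → A
  pt : C
  mem : ∀ i, pt ∈ (D (idx i)).objs

/-- Morphisms `x_{a₀…aₙ} ⟶ y_{b₀…bₘ}` of `Gr(Č(D))`: pairs `(φ, f)` of an
order-preserving map `φ : [m] → [n]` with `b_j = a_{φ(j)}` for all `j`, and a morphism
`f : x ⟶ y` of the intersection `D_{b₀…bₘ}`. -/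
structure GrCechHom (D : A → Subcat C) (X Y : GrCechObj D) where
  φ : Fin (Y.n + 1) →o Fin (X.n + 1)
  idx_eq : ∀ j, Y.idx j = X.idx (φ j)
  f : X.pt ⟶ Y.pt
  mem : ∀ j, f ∈ (D (Y.idx j)).homs X.pt Y.pt

theorem GrCechHom.ext' {D : A → Subcat C} {X Y : GrCechObj D}
    {F G : GrCechHom D X Y} (h1 : F.φ = G.φ) (h2 : F.f = G.f) : F = G := by
  cases F; cases G; cases h1; cases h2; rfl

/-- The Grothendieck construction `Gr(Č(D))` of the Čech nerve, as a category. -/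
instance GrCech.category (D : A → Subcat C) : Category (GrCechObj D) where
  Hom X Y := GrCechHom D X Y
  id X :=
    { φ := OrderHom.id
      idx_eq := fun _ => rfl
      f := 𝟙 X.pt
      mem := fun j => (D (X.idx j)).id_mem _ (X.mem j) }
  comp {X Y Z} F G :=
    { φ := F.φ.comp G.φ
      idx_eq := fun j => (G.idx_eq j).trans (F.idx_eq (G.φ j))
      f := F.f ≫ G.f
      mem := fun j => (D (Z.idx j)).comp_mem F.f G.f
        (by rw [G.idx_eq j]; exact F.mem (G.φ j)) (G.mem j) }
  id_comp F := GrCechHom.ext' rfl (Category.id_comp _)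
  comp_id F := GrCechHom.ext' rfl (Category.comp_id _)
  assoc F G H := GrCechHom.ext' rfl (Category.assoc _ _ _)

/-- The natural functor `ρ : Gr(Č(D)) ⥤ C` forgetting indices. -/
def grProj (D : A → Subcat C) : GrCechObj D ⥤ C where
  obj X := X.pt
  map F := F.f
  map_id _ := rfl
  map_comp _ _ := rfl

/-- The Grothendieck construction `Gr(Č^o(D̃))` of the reduced Čech nerve, with respect
to a total order on the index set with strict order `lt`: the full subcategory of
`Gr(Č(D))` on the objects with strictly increasing index tuple.  (Between two objects
with pairwise distinct indices, the index maps `φ` of morphisms of `Gr(Č(D))` are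
automatically injective, so this agrees with the Grothendieck construction over
`Δ_inj`.) -/
abbrev GrCechRed (D : A → Subcat C) (lt : A → A → Prop) : Type :=
  ObjectProperty.FullSubcategory (fun X : GrCechObj D => ∀ i j : Fin (X.n + 1), i < j → lt (X.idx i) (X.idx j))

/-- The inclusion functor `Gr(Č^o(D̃)) ⥤ Gr(Č(D))`. -/
def redIncl (D : A → Subcat C) (lt : A → A → Prop) : GrCechRed D lt ⥤ GrCechObj D :=
  ObjectProperty.ι _

end CechCover

open CechCover


namespace CechProof

open CechCover

variable {C : Type} [SmallCategory C] {A : Type} [LinearOrder A]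

/-- The finite set of indices of subcategories containing `x`. -/
noncomputable def s (D : A → Subcat C) (hlf : IsLocallyFinite D) (x : C) : Finset A :=
  (hlf x).toFinset

lemma mem_s (D : A → Subcat C) (hlf : IsLocallyFinite D) {x : C} {a : A} :
    a ∈ s D hlf x ↔ x ∈ (D a).objs :=
  Set.Finite.mem_toFinset _

lemma card_s (D : A → Subcat C) (hcover : IsCover D) (hlf : IsLocallyFinite D) (x : C) :
    (s D hlf x).card = (s D hlf x).card - 1 + 1 := by
  obtain ⟨a, ha⟩ := hcover.1 x
  have : (s D hlf x).Nonempty := ⟨a, (mem_s D hlf).mpr ha⟩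
  exact (Nat.succ_pred_eq_of_pos (Finset.card_pos.mpr this)).symm

/-- The increasing enumeration of `s x`. -/
noncomputable def enum (D : A → Subcat C) (hcover : IsCover D) (hlf : IsLocallyFinite D)
    (x : C) : Fin ((s D hlf x).card - 1 + 1) ≃o {a // a ∈ s D hlf x} :=
  (s D hlf x).orderIsoOfFin (card_s D hcover hlf x)

/-- The object `x_{a₀…aₙ}` where `a₀ < ⋯ < aₙ` enumerates all indices containing `x`. -/
noncomputable def piObj (D : A → Subcat C) (hcover : IsCover D) (hlf : IsLocallyFinite D)
    (x : Cᵒᵖ) : GrCechRed (fun a => (D a).op) (· < ·) :=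
  ⟨{ n := (s D hlf x.unop).card - 1
     idx := fun i => (enum D hcover hlf x.unop i : A)
     pt := x
     mem := fun i => (mem_s D hlf).mp (enum D hcover hlf x.unop i).2 },
   fun i j hij => Subtype.coe_lt_coe.mpr ((enum D hcover hlf x.unop).strictMono hij)⟩

lemma idx_mem (D : A → Subcat C) (hlf : IsLocallyFinite D)
    (hfilter : ∀ a, (D a).IsFilter) (x : Cᵒᵖ) (Y : GrCechObj (fun a => (D a).op))
    (g : x ⟶ Y.pt) (j : Fin (Y.n + 1)) : Y.idx j ∈ s D hlf x.unop := by
  rw [mem_s]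
  exact (hfilter (Y.idx j)).2 Y.pt.unop x.unop (Y.mem j) ⟨g.unop⟩

/-- The morphism `π(x) ⟶ Y` of `Gr(Č^o(D̃^op))` over a given `g : x ⟶ Y.pt`. -/
noncomputable def lift (D : A → Subcat C) (hcover : IsCover D) (hlf : IsLocallyFinite D)
    (hfilter : ∀ a, (D a).IsFilter) (x : Cᵒᵖ)
    (Y : GrCechRed (fun a => (D a).op) (· < ·)) (g : x ⟶ Y.obj.pt) :
    GrCechHom (fun a => (D a).op) (piObj D hcover hlf x).obj Y.obj where
  φ := ⟨fun j => (enum D hcover hlf x.unop).symm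
          ⟨Y.obj.idx j, idx_mem D hlf hfilter x Y.obj g j⟩,
        by
          intro i j hij
          apply (enum D hcover hlf x.unop).symm.monotone
          rw [Subtype.mk_le_mk]
          rcases lt_or_eq_of_le hij with h | h
          · exact le_of_lt (Y.property i j h)
          · rw [h]⟩
  idx_eq := fun j =>
    (congrArg Subtype.val ((enum D hcover hlf x.unop).apply_symm_apply
      ⟨Y.obj.idx j, idx_mem D hlf hfilter x Y.obj g j⟩)).symm
  f := g
  mem := fun j => by
    have h1 : Y.obj.pt.unop ∈ (D (Y.obj.idx j)).objs := Y.obj.mem j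
    have h2 : x.unop ∈ (D (Y.obj.idx j)).objs :=
      (mem_s D hlf).mp (idx_mem D hlf hfilter x Y.obj g j)
    show g.unop ∈ (D (Y.obj.idx j)).homs Y.obj.pt.unop x.unop
    rw [(hfilter (Y.obj.idx j)).1 _ _ h1 h2]
    trivial

lemma phi_eq (D : A → Subcat C) (hcover : IsCover D) (hlf : IsLocallyFinite D)
    (x : Cᵒᵖ) (Y : GrCechRed (fun a => (D a).op) (· < ·))
    (H : piObj D hcover hlf x ⟶ Y) (j : Fin (Y.obj.n + 1))
    (h : Y.obj.idx j ∈ s D hlf x.unop) :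
    H.hom.φ j = (enum D hcover hlf x.unop).symm ⟨Y.obj.idx j, h⟩ := by
  exact ((enum D hcover hlf x.unop).toEquiv.symm_apply_eq.mpr
    (Subtype.ext (H.hom.idx_eq j))).symm

lemma hom_ext (D : A → Subcat C) (hcover : IsCover D) (hlf : IsLocallyFinite D)
    (x : Cᵒᵖ) (Y : GrCechRed (fun a => (D a).op) (· < ·))
    (H K : piObj D hcover hlf x ⟶ Y) (hf : H.hom.f = K.hom.f) : H = K := by
  apply ObjectProperty.hom_ext
  apply GrCechHom.ext' _ hf
  ext j
  have h : Y.obj.idx j ∈ s D hlf x.unop := by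
    rw [mem_s]
    exact ((D (Y.obj.idx j)).op.homs_subset _ _ ⟨H.hom.f, H.hom.mem j⟩).1
  rw [phi_eq D hcover hlf x Y H j h, phi_eq D hcover hlf x Y K j h]

/-- The left adjoint `π : Cᵒᵖ ⥤ Gr(Č^o(D̃^op))`. -/
noncomputable def piFunctor (D : A → Subcat C) (hcover : IsCover D)
    (hlf : IsLocallyFinite D) (hfilter : ∀ a, (D a).IsFilter) :
    Cᵒᵖ ⥤ GrCechRed (fun a => (D a).op) (· < ·) where
  obj := piObj D hcover hlf
  map {x y} g := ObjectProperty.homMk (lift D hcover hlf hfilter x (piObj D hcover hlf y) g)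
  map_id x := hom_ext D hcover hlf _ _ _ _ rfl
  map_comp f g := hom_ext D hcover hlf _ _ _ _ rfl

/-- The adjunction data. -/
noncomputable def adj (D : A → Subcat C) (hcover : IsCover D)
    (hlf : IsLocallyFinite D) (hfilter : ∀ a, (D a).IsFilter) :
    piFunctor D hcover hlf hfilter ⊣
      redIncl (fun a => (D a).op) (· < ·) ⋙ grProj (fun a => (D a).op) :=
  Adjunction.mkOfHomEquiv
    { homEquiv := fun x Y =>
        { toFun := fun F => F.hom.f
          invFun := fun g => ObjectProperty.homMk (lift D hcover hlf hfilter x Y g)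
          left_inv := fun F => hom_ext D hcover hlf x Y _ F rfl
          right_inv := fun g => rfl }
      homEquiv_naturality_left_symm := fun f g =>
        hom_ext D hcover hlf _ _ _ _ rfl
      homEquiv_naturality_right := fun f g => rfl }

end CechProof

/-- For a locally finite filter cover `D` of a small category `C` indexed by a totally
ordered set, the natural functor `Gr(Č^o(D̃^op)) ⥤ C^op`, from the Grothendieck
construction of the reduced Čech nerve of the opposite cover `D^op` of `C^op`, has a
left adjoint. -/
theorem reduced_cech_nerve_left_adjoint_of_filter_cover
    {C : Type} [SmallCategory C] {A : Type} [LinearOrder A] (D : A → Subcat C)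
    (hcover : IsCover D) (hlf : IsLocallyFinite D) (hfilter : ∀ a, (D a).IsFilter) :
    ∃ π : Cᵒᵖ ⥤ GrCechRed (fun a => (D a).op) (· < ·),
      Nonempty (π ⊣ redIncl (fun a => (D a).op) (· < ·) ⋙ grProj (fun a => (D a).op)) := by
  exact ⟨CechProof.piFunctor D hcover hlf hfilter, ⟨CechProof.adj D hcover hlf hfilter⟩⟩
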